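/- The treewidth of a graph equals the maximum of the treewidths of its biconnected components (blocks). -/

import Mathlib

open SimpleGraph

/-- The ladder of length `k`: the `2 × (k+1)` grid graph. -/
def ladder (k : ℕ) : SimpleGraph (Fin 2 × Fin (k + 1)) :=
  SimpleGraph.fromRel fun p q =>
    (p.1 = q.1 ∧ p.2.val + 1 = q.2.val) ∨ (p.2 = q.2 ∧ p.1 ≠ q.1)

/-- `G` contains a ladder of length `k`: an induced copy of the `2 × (k+1)` grid,
attached to the rest of `G` only via its four cornerpoints (the vertices in columns `0` and `k`). -/
structure ContainsLadder {V : Type} (G : SimpleGraph V) (k : ℕ) where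
  f : Fin 2 × Fin (k + 1) → V
  inj : Function.Injective f
  induced : ∀ p q, G.Adj (f p) (f q) ↔ (ladder k).Adj p q
  attach : ∀ p : Fin 2 × Fin (k + 1), p.2.val ≠ 0 → p.2.val ≠ k →
    ∀ v : V, G.Adj (f p) v → v ∈ Set.range f

/-- The two horizontal edges of square `i` of the ladder form an edge cut of `G`. -/
def ContainsLadder.SquareCut {V : Type} {G : SimpleGraph V} {k : ℕ}
    (L : ContainsLadder G k) (i : Fin k) : Prop :=
  ¬ (G.deleteEdges {s(L.f (0, i.castSucc), L.f (0, i.succ)),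
      s(L.f (1, i.castSucc), L.f (1, i.succ))}).Connected

/-- The ladder is disconnecting: the horizontal edges of some square form an edge cut. -/
def ContainsLadder.Disconnects {V : Type} {G : SimpleGraph V} {k : ℕ}
    (L : ContainsLadder G k) : Prop :=
  ∃ i : Fin k, L.SquareCut i

/-- A tree decomposition of a graph. -/
structure TreeDecomp {V : Type} (G : SimpleGraph V) where
  ι : Type
  [fin : Fintype ι]
  tree : SimpleGraph ι
  isTree : tree.IsTree
  bag : ι → Finset V
  cover_vertex : ∀ v : V, ∃ i, v ∈ bag i
  cover_edge : ∀ ⦃u v : V⦄, G.Adj u v → ∃ i, u ∈ bag i ∧ v ∈ bag i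
  bag_connected : ∀ v : V, (tree.induce {i | v ∈ bag i}).Connected

/-- The width of a tree decomposition: maximum bag size minus one. -/
def TreeDecomp.width {V : Type} {G : SimpleGraph V} (td : TreeDecomp G) : ℕ :=
  letI := td.fin
  (Finset.univ.sup fun i => (td.bag i).card) - 1

/-- The treewidth of a graph: minimum width over all tree decompositions. -/
noncomputable def treewidth {V : Type} (G : SimpleGraph V) : ℕ :=
  sInf (Set.range fun td : TreeDecomp G => td.width)

/-- `H` is a minor of `G`: witnessed by pairwise disjoint nonempty connected branch sets. -/
def IsMinor {W V : Type} (H : SimpleGraph W) (G : SimpleGraph V) : Prop :=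
  ∃ φ : W → Set V, (∀ w, (φ w).Nonempty) ∧ (∀ w, (G.induce (φ w)).Connected) ∧
    (∀ w w', w ≠ w' → Disjoint (φ w) (φ w')) ∧
    (∀ w w', H.Adj w w' → ∃ u ∈ φ w, ∃ v ∈ φ w', G.Adj u v)

/-- Lengthen the ladder `L` by `m` squares, by inserting `m` new rungs between
columns `0` and `1` (subdividing the two horizontal edges and adding rungs). -/
def extendLadder {V : Type} (G : SimpleGraph V) {k : ℕ} (L : ContainsLadder G k) (m : ℕ) :
    SimpleGraph (V ⊕ (Fin 2 × Fin m)) :=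
  SimpleGraph.fromRel fun p q =>
    (∃ u v : V, p = Sum.inl u ∧ q = Sum.inl v ∧ G.Adj u v ∧
      (m ≠ 0 → ∀ a : Fin 2, s(u, v) ≠ s(L.f (a, 0), L.f (a, 1)))) ∨
    (∃ (a : Fin 2) (j : Fin m), j.val = 0 ∧ p = Sum.inl (L.f (a, 0)) ∧ q = Sum.inr (a, j)) ∨
    (∃ (a : Fin 2) (j : Fin m), j.val = m - 1 ∧ p = Sum.inr (a, j) ∧ q = Sum.inl (L.f (a, 1))) ∨
    (∃ (a : Fin 2) (j j' : Fin m), j.val + 1 = j'.val ∧ p = Sum.inr (a, j) ∧ q = Sum.inr (a, j')) ∨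
    (∃ (a b : Fin 2) (j : Fin m), a ≠ b ∧ p = Sum.inr (a, j) ∧ q = Sum.inr (b, j))

/-- Insert one new rung into square `i` of the ladder `L`: two new vertices `inr 0, inr 1`
subdividing the horizontal edges of square `i`, joined by an edge. -/
def insertRung {V : Type} (G : SimpleGraph V) {k : ℕ} (L : ContainsLadder G k) (i : Fin k) :
    SimpleGraph (V ⊕ Fin 2) :=
  SimpleGraph.fromRel fun p q =>
    (∃ u v : V, p = Sum.inl u ∧ q = Sum.inl v ∧ G.Adj u v ∧
      ∀ a : Fin 2, s(u, v) ≠ s(L.f (a, i.castSucc), L.f (a, i.succ))) ∨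
    (∃ a : Fin 2, p = Sum.inl (L.f (a, i.castSucc)) ∧ q = Sum.inr a) ∨
    (∃ a : Fin 2, p = Sum.inr a ∧ q = Sum.inl (L.f (a, i.succ))) ∨
    (p = Sum.inr (0 : Fin 2) ∧ q = Sum.inr (1 : Fin 2))

/-- Contract the edge `{u, v}` of `G`: merge `v` into `u`. -/
def contractEdge {V : Type} (G : SimpleGraph V) (u v : V) : SimpleGraph {x : V // x ≠ v} :=
  SimpleGraph.fromRel fun x y =>
    G.Adj x.val y.val ∨ (x.val = u ∧ G.Adj v y.val) ∨ (y.val = u ∧ G.Adj x.val v)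

/-- Subdivide the edge `{u, v}` of `G` with a new vertex. -/
def subdivide {V : Type} (G : SimpleGraph V) (u v : V) : SimpleGraph (V ⊕ Unit) :=
  SimpleGraph.fromRel fun p q =>
    (∃ x y : V, p = Sum.inl x ∧ q = Sum.inl y ∧ G.Adj x y ∧ s(x, y) ≠ s(u, v)) ∨
    (p = Sum.inl u ∧ q = Sum.inr ()) ∨ (p = Sum.inl v ∧ q = Sum.inr ())

/-- Suppress the degree-2 vertex `v` with neighbours `a` and `b`:
delete `v` and add the edge `{a, b}` (if not already present). -/
def suppress {V : Type} (G : SimpleGraph V) (v a b : V) : SimpleGraph {x : V // x ≠ v} :=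
  SimpleGraph.fromRel fun x y =>
    G.Adj x.val y.val ∨ (x.val = a ∧ y.val = b)

/-- A graph is chordal if every cycle on at least 4 vertices has a chord. -/
def IsChordal {V : Type} (G : SimpleGraph V) : Prop :=
  ∀ n : ℕ, ∀ f : Fin (n + 4) → V, Function.Injective f →
    (∀ i : Fin (n + 4), G.Adj (f i) (f (i + 1))) →
    ∃ i j : Fin (n + 4), i ≠ j ∧ j ≠ i + 1 ∧ i ≠ j + 1 ∧ G.Adj (f i) (f j)

/-- The induced subgraph on `S` has no cutvertex. -/
def NoCutvertex {V : Type} (G : SimpleGraph V) (S : Set V) : Prop :=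
  ∀ v ∈ S, ∀ x y : ↥(S \ {v}), (G.induce (S \ {v})).Reachable x y

/-- `S` is a block (biconnected component) of `G`: a maximal connected
vertex set without a cutvertex. -/
def IsBlock {V : Type} (G : SimpleGraph V) (S : Set V) : Prop :=
  S.Nonempty ∧ (G.induce S).Connected ∧ NoCutvertex G S ∧
  ∀ T : Set V, S ⊆ T → (G.induce T).Connected → NoCutvertex G T → T = S

-- helper batch 1
section Helpers

lemma reach_map' {α β : Type*} {G : SimpleGraph α} {H : SimpleGraph β} (f : α → β)
    (hf : ∀ x y, G.Adj x y → H.Adj (f x) (f y) ∨ f x = f y) {a b : α}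
    (h : G.Reachable a b) : H.Reachable (f a) (f b) := by
  obtain ⟨w⟩ := h
  induction w with
  | nil => exact Reachable.refl _
  | cons h' p ih =>
    rcases hf _ _ h' with h2 | h2
    · exact (h2.reachable).trans ih
    · rw [h2]; exact ih

lemma reach_induce {V : Type*} {G : SimpleGraph V} {S : Set V} {a b : V} (w : G.Walk a b)
    (hw : ∀ z ∈ w.support, z ∈ S) (ha : a ∈ S) (hb : b ∈ S) :
    (G.induce S).Reachable ⟨a, ha⟩ ⟨b, hb⟩ := by
  induction w with
  | nil => exact Reachable.refl _
  | @cons a c b h p ih =>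
    have hc : c ∈ S := hw c (by simp)
    have h1 : (G.induce S).Adj ⟨a, ha⟩ ⟨c, hc⟩ := by simpa using h
    exact h1.reachable.trans (ih (fun z hz => hw z (by simp [hz])) hc hb)

lemma crossing {V : Type*} {G : SimpleGraph V} {V₁ V₂ : Set V}
    (hedge : ∀ u w, G.Adj u w → (u ∈ V₁ ∧ w ∈ V₁) ∨ (u ∈ V₂ ∧ w ∈ V₂))
    {b : V} (hb : b ∉ V₁) :
    ∀ {a : V} (w : G.Walk a b), a ∈ V₁ → a ∉ V₂ → ∃ x ∈ w.support, x ∈ V₁ ∩ V₂ := by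
  intro a w
  induction w with
  | nil => intro ha _; exact absurd ha hb
  | @cons a c b h p ih =>
    intro ha ha2
    have hc : c ∈ V₁ := by
      rcases hedge a c h with ⟨_, h1⟩ | ⟨h1, _⟩
      · exact h1
      · exact absurd h1 ha2
    by_cases hc2 : c ∈ V₂
    · exact ⟨c, by simp, ⟨hc, hc2⟩⟩
    · obtain ⟨x, hx, hx2⟩ := ih hb hc hc2
      exact ⟨x, by simp [hx], hx2⟩

end Helpers

section Helpers2
variable {V W : Type}

/-- trivial tree decomposition: one bag containing everything -/
noncomputable def trivTD [Fintype V] (G : SimpleGraph V) : TreeDecomp G where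
  ι := Unit
  tree := ⊥
  isTree := ⟨(connected_iff _).mpr ⟨fun x y => by cases x; cases y; exact Reachable.refl _, ⟨()⟩⟩,
    isAcyclic_bot⟩
  bag := fun _ => Finset.univ
  cover_vertex v := ⟨(), Finset.mem_univ v⟩
  cover_edge u v _ := ⟨(), Finset.mem_univ u, Finset.mem_univ v⟩
  bag_connected v := by
    rw [connected_iff _]
    refine ⟨fun x y => ?_, ⟨⟨(), Finset.mem_univ v⟩⟩⟩
    have : x = y := Subtype.ext (Subsingleton.elim _ _)
    rw [this]

lemma trivTD_width [Fintype V] (G : SimpleGraph V) : (trivTD G).width = Fintype.card V - 1 := by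
  simp only [TreeDecomp.width, trivTD]
  exact congrArg (· - 1) ((Finset.sup_const (s := (Finset.univ : Finset Unit))
    ⟨(), Finset.mem_univ _⟩ ((Finset.univ : Finset V).card)).trans Finset.card_univ)

lemma treewidth_le_width {G : SimpleGraph V} (td : TreeDecomp G) : treewidth G ≤ td.width :=
  Nat.sInf_le ⟨td, rfl⟩

lemma exists_td_width_eq [Fintype V] (G : SimpleGraph V) :
    ∃ td : TreeDecomp G, td.width = treewidth G := by
  have h : (Set.range fun td : TreeDecomp G => td.width).Nonempty := ⟨_, ⟨trivTD G, rfl⟩⟩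
  exact Nat.sInf_mem h

lemma treewidth_le_of_subsingleton [Fintype V] [Subsingleton V] (G : SimpleGraph V) :
    treewidth G = 0 := by
  have := treewidth_le_width (trivTD G)
  rw [trivTD_width] at this
  have h1 : Fintype.card V ≤ 1 := Fintype.card_le_one_iff_subsingleton.mpr ‹_›
  omega

/-- transport a tree decomposition along an isomorphism -/
noncomputable def TreeDecomp.mapIso {G : SimpleGraph V} {H : SimpleGraph W} (e : G ≃g H)
    (td : TreeDecomp G) : TreeDecomp H where
  ι := td.ι
  fin := td.fin
  tree := td.tree
  isTree := td.isTree
  bag := fun i => letI := Classical.decEq W; (td.bag i).image e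
  cover_vertex v := by
    obtain ⟨i, hi⟩ := td.cover_vertex (e.symm v)
    exact ⟨i, by classical simpa using Finset.mem_image_of_mem e hi⟩
  cover_edge u v huv := by
    obtain ⟨i, hi1, hi2⟩ := td.cover_edge (e.symm.map_adj_iff.mpr huv)
    exact ⟨i, by classical simpa using Finset.mem_image_of_mem e hi1,
      by classical simpa using Finset.mem_image_of_mem e hi2⟩
  bag_connected v := by
    classical
    have hset : ∀ i : td.ι, (v ∈ (td.bag i).image e) ↔ e.symm v ∈ td.bag i := by
      intro i
      simp only [Finset.mem_image]
      constructor
      · rintro ⟨x, hx, rfl⟩; simpa using hx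
      · intro h; exact ⟨e.symm v, h, by simp⟩
    have hss : {i : td.ι | v ∈ (td.bag i).image e} = {i | e.symm v ∈ td.bag i} := by
      ext i; exact hset i
    have h3 : (td.tree.induce {i : td.ι | v ∈ (td.bag i).image e}).Connected := by
      rw [hss]; exact td.bag_connected (e.symm v)
    exact h3

lemma TreeDecomp.mapIso_width {G : SimpleGraph V} {H : SimpleGraph W} (e : G ≃g H)
    (td : TreeDecomp G) : (td.mapIso e).width = td.width := by
  unfold TreeDecomp.width
  congr 1
  letI := td.fin
  apply Finset.sup_congr rfl
  intro i _
  classical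
  exact Finset.card_image_of_injective _ (e.toEquiv.injective)

lemma treewidth_iso [Fintype V] [Fintype W] {G : SimpleGraph V} {H : SimpleGraph W} (e : G ≃g H) :
    treewidth G = treewidth H := by
  apply le_antisymm
  · obtain ⟨td, htd⟩ := exists_td_width_eq H
    have := treewidth_le_width (td.mapIso e.symm)
    rwa [TreeDecomp.mapIso_width, htd] at this
  · obtain ⟨td, htd⟩ := exists_td_width_eq G
    have := treewidth_le_width (td.mapIso e)
    rwa [TreeDecomp.mapIso_width, htd] at this

/-- restriction of a tree decomposition to an induced subgraph -/
noncomputable def TreeDecomp.restrict {G : SimpleGraph V} (td : TreeDecomp G) (S : Set V) :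
    TreeDecomp (G.induce S) where
  ι := td.ι
  fin := td.fin
  tree := td.tree
  isTree := td.isTree
  bag := fun i => letI : DecidablePred (· ∈ S) := Classical.decPred _; (td.bag i).subtype (· ∈ S)
  cover_vertex v := by
    obtain ⟨i, hi⟩ := td.cover_vertex v.val
    exact ⟨i, by classical simpa [Finset.mem_subtype] using hi⟩
  cover_edge u v huv := by
    obtain ⟨i, hi1, hi2⟩ := td.cover_edge (show G.Adj u.val v.val by simpa using huv)
    exact ⟨i, by classical simpa [Finset.mem_subtype] using hi1,
      by classical simpa [Finset.mem_subtype] using hi2⟩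
  bag_connected v := by
    classical
    have hss : {i : td.ι | v ∈ (td.bag i).subtype (· ∈ S)} = {i | v.val ∈ td.bag i} := by
      ext i; simp [Finset.mem_subtype]
    have h3 : (td.tree.induce {i : td.ι | v ∈ (td.bag i).subtype (· ∈ S)}).Connected := by
      rw [hss]; exact td.bag_connected v.val
    exact h3

lemma TreeDecomp.restrict_width_le {G : SimpleGraph V} (td : TreeDecomp G) (S : Set V) :
    (td.restrict S).width ≤ td.width := by
  unfold TreeDecomp.width
  apply Nat.sub_le_sub_right
  letI := td.fin
  apply Finset.sup_mono_fun
  intro i _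
  classical
  calc ((td.bag i).subtype (· ∈ S)).card = ((td.bag i).filter (· ∈ S)).card :=
        Finset.card_subtype _ _
    _ ≤ (td.bag i).card := Finset.card_filter_le _ _

lemma treewidth_induce_le [Fintype V] (G : SimpleGraph V) (S : Set V) :
    treewidth (G.induce S) ≤ treewidth G := by
  obtain ⟨td, htd⟩ := exists_td_width_eq G
  exact (treewidth_le_width (td.restrict S)).trans (htd ▸ td.restrict_width_le S)

end Helpers2
section Join
variable {ι₁ ι₂ : Type}

def joinTree (T₁ : SimpleGraph ι₁) (T₂ : SimpleGraph ι₂) (r₁ : ι₁) (r₂ : ι₂) :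
    SimpleGraph (ι₁ ⊕ ι₂) where
  Adj p q := match p, q with
    | .inl a, .inl b => T₁.Adj a b
    | .inr a, .inr b => T₂.Adj a b
    | .inl a, .inr b => a = r₁ ∧ b = r₂
    | .inr a, .inl b => b = r₁ ∧ a = r₂
  symm := by
    constructor
    rintro (a | a) (b | b) h
    · exact h.symm
    · exact h
    · exact h
    · exact h.symm
  loopless := by
    constructor
    rintro (a | a) h
    · exact h.ne rfl
    · exact h.ne rfl

variable {T₁ : SimpleGraph ι₁} {T₂ : SimpleGraph ι₂} {r₁ : ι₁} {r₂ : ι₂}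

@[simp] lemma joinTree_adj_ll {a b : ι₁} :
    (joinTree T₁ T₂ r₁ r₂).Adj (.inl a) (.inl b) ↔ T₁.Adj a b := Iff.rfl
@[simp] lemma joinTree_adj_rr {a b : ι₂} :
    (joinTree T₁ T₂ r₁ r₂).Adj (.inr a) (.inr b) ↔ T₂.Adj a b := Iff.rfl
@[simp] lemma joinTree_adj_lr {a : ι₁} {b : ι₂} :
    (joinTree T₁ T₂ r₁ r₂).Adj (.inl a) (.inr b) ↔ a = r₁ ∧ b = r₂ := Iff.rfl
@[simp] lemma joinTree_adj_rl {a : ι₂} {b : ι₁} :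
    (joinTree T₁ T₂ r₁ r₂).Adj (.inr a) (.inl b) ↔ b = r₁ ∧ a = r₂ := Iff.rfl

lemma joinTree_isTree (h₁ : T₁.IsTree) (h₂ : T₂.IsTree) :
    (joinTree T₁ T₂ r₁ r₂).IsTree := by
  constructor
  · -- connected
    rw [connected_iff _]
    refine ⟨?_, ⟨.inl r₁⟩⟩
    have lift₁ : ∀ a b : ι₁, (joinTree T₁ T₂ r₁ r₂).Reachable (.inl a) (.inl b) := by
      intro a b
      exact reach_map' Sum.inl (fun x y h => Or.inl h) (h₁.isConnected.preconnected a b)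
    have lift₂ : ∀ a b : ι₂, (joinTree T₁ T₂ r₁ r₂).Reachable (.inr a) (.inr b) := by
      intro a b
      exact reach_map' Sum.inr (fun x y h => Or.inl h) (h₂.isConnected.preconnected a b)
    have cross : (joinTree T₁ T₂ r₁ r₂).Reachable (.inl r₁) (.inr r₂) :=
      (joinTree_adj_lr.mpr ⟨rfl, rfl⟩).reachable
    have hub : ∀ p : ι₁ ⊕ ι₂, (joinTree T₁ T₂ r₁ r₂).Reachable p (.inl r₁) := by
      rintro (a | a)
      · exact lift₁ a r₁
      · exact (lift₂ a r₂).trans cross.symm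
    exact fun p q => (hub p).trans (hub q).symm
  · -- acyclic
    rw [isAcyclic_iff_forall_adj_isBridge]
    have swap : ∀ (p q : ι₁ ⊕ ι₂), s(p, q) = s(q, p) := fun p q => Sym2.eq_swap
    rintro (a | a) (b | b) hadj
    · -- edge in T₁
      rw [isBridge_iff]
      refine fun hreach => ?_
      have hbr := (isAcyclic_iff_forall_adj_isBridge.mp h₁.IsAcyclic) hadj
      rw [isBridge_iff] at hbr
      apply hbr
      refine reach_map' (Sum.elim id fun _ => r₁) ?_ hreach
      rintro (x | x) (y | y) ⟨hxy, hne⟩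
      · refine Or.inl ⟨hxy, fun hcon => hne ?_⟩
        simp only [Sum.elim_inl, id_eq, fromEdgeSet_adj, Set.mem_singleton_iff] at hcon
        simp only [fromEdgeSet_adj, Set.mem_singleton_iff]
        refine ⟨?_, fun h => hcon.2 (Sum.inl.inj h)⟩
        have := congrArg (Sym2.map (Sum.inl : ι₁ → ι₁ ⊕ ι₂)) hcon.1
        simpa [Sym2.map_pair_eq] using this
      · exact Or.inr (by simp [hxy.1])
      · exact Or.inr (by simp [hxy.1])
      · exact Or.inr rfl
    · -- cross edge inl inr
      rw [isBridge_iff]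
      refine fun hreach => ?_
      obtain ⟨ha, hb⟩ : a = r₁ ∧ b = r₂ := hadj
      have : (Sum.elim (fun _ => True) (fun _ => False) (Sum.inl a : ι₁ ⊕ ι₂)) =
          (Sum.elim (fun _ => True) (fun _ => False) (Sum.inr b : ι₁ ⊕ ι₂)) := by
        refine reachable_bot.mp (reach_map' _ ?_ hreach)
        rintro (x | x) (y | y) ⟨hxy, hne⟩
        · exact Or.inr rfl
        · refine absurd ?_ hne
          simp only [fromEdgeSet_adj, Set.mem_singleton_iff]
          exact ⟨by rw [hxy.1, hxy.2, ha, hb], by simp⟩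
        · refine absurd ?_ hne
          simp only [fromEdgeSet_adj, Set.mem_singleton_iff]
          refine ⟨?_, by simp⟩
          rw [hxy.1, hxy.2, ha, hb]; exact swap _ _
        · exact Or.inr rfl
      simp at this
    · -- cross edge inr inl
      rw [isBridge_iff]
      refine fun hreach => ?_
      obtain ⟨hb, ha⟩ : b = r₁ ∧ a = r₂ := hadj
      have : (Sum.elim (fun _ => True) (fun _ => False) (Sum.inr a : ι₁ ⊕ ι₂)) =
          (Sum.elim (fun _ => True) (fun _ => False) (Sum.inl b : ι₁ ⊕ ι₂)) := by
        refine reachable_bot.mp (reach_map' _ ?_ hreach)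
        rintro (x | x) (y | y) ⟨hxy, hne⟩
        · exact Or.inr rfl
        · refine absurd ?_ hne
          simp only [fromEdgeSet_adj, Set.mem_singleton_iff]
          refine ⟨?_, by simp⟩
          rw [hxy.1, hxy.2, hb, ha]; exact swap _ _
        · refine absurd ?_ hne
          simp only [fromEdgeSet_adj, Set.mem_singleton_iff]
          exact ⟨by rw [hxy.1, hxy.2, hb, ha], by simp⟩
        · exact Or.inr rfl
      simp at this
    · -- edge in T₂
      rw [isBridge_iff]
      refine fun hreach => ?_
      have hbr := (isAcyclic_iff_forall_adj_isBridge.mp h₂.IsAcyclic) hadj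
      rw [isBridge_iff] at hbr
      apply hbr
      refine reach_map' (Sum.elim (fun _ => r₂) id) ?_ hreach
      rintro (x | x) (y | y) ⟨hxy, hne⟩
      · exact Or.inr rfl
      · exact Or.inr (by simp [hxy.2])
      · exact Or.inr (by simp [hxy.2])
      · refine Or.inl ⟨hxy, fun hcon => hne ?_⟩
        simp only [Sum.elim_inr, id_eq, fromEdgeSet_adj, Set.mem_singleton_iff] at hcon
        simp only [fromEdgeSet_adj, Set.mem_singleton_iff]
        refine ⟨?_, fun h => hcon.2 (Sum.inr.inj h)⟩
        have := congrArg (Sym2.map (Sum.inr : ι₂ → ι₁ ⊕ ι₂)) hcon.1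
        simpa [Sym2.map_pair_eq] using this

end Join
section Glue
variable {V : Type}

lemma max_sub_one (a b : ℕ) : max a b - 1 = max (a - 1) (b - 1) := by
  rcases le_total a b with h | h
  · rw [max_eq_right h, max_eq_right (Nat.sub_le_sub_right h 1)]
  · rw [max_eq_left h, max_eq_left (Nat.sub_le_sub_right h 1)]

noncomputable def glueTD (G : SimpleGraph V) (V₁ V₂ : Set V)
    (hcov : ∀ v : V, v ∈ V₁ ∨ v ∈ V₂)
    (hedge : ∀ u w : V, G.Adj u w → (u ∈ V₁ ∧ w ∈ V₁) ∨ (u ∈ V₂ ∧ w ∈ V₂))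
    (td₁ : TreeDecomp (G.induce V₁)) (td₂ : TreeDecomp (G.induce V₂))
    (r₁ : td₁.ι) (r₂ : td₂.ι)
    (hr : ∀ (x : V) (h1 : x ∈ V₁) (h2 : x ∈ V₂),
      (⟨x, h1⟩ : ↥V₁) ∈ td₁.bag r₁ ∧ (⟨x, h2⟩ : ↥V₂) ∈ td₂.bag r₂) :
    TreeDecomp G where
  ι := td₁.ι ⊕ td₂.ι
  fin := letI := td₁.fin; letI := td₂.fin; inferInstance
  tree := joinTree td₁.tree td₂.tree r₁ r₂
  isTree := joinTree_isTree td₁.isTree td₂.isTree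
  bag := fun p => letI := Classical.decEq V;
    Sum.elim (fun i => (td₁.bag i).image Subtype.val)
      (fun j => (td₂.bag j).image Subtype.val) p
  cover_vertex v := by
    classical
    rcases hcov v with h | h
    · obtain ⟨i, hi⟩ := td₁.cover_vertex ⟨v, h⟩
      exact ⟨.inl i, Finset.mem_image_of_mem _ hi⟩
    · obtain ⟨j, hj⟩ := td₂.cover_vertex ⟨v, h⟩
      exact ⟨.inr j, Finset.mem_image_of_mem _ hj⟩
  cover_edge u w huw := by
    classical
    rcases hedge u w huw with ⟨h1, h2⟩ | ⟨h1, h2⟩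
    · obtain ⟨i, hi1, hi2⟩ := td₁.cover_edge
        (show (G.induce V₁).Adj ⟨u, h1⟩ ⟨w, h2⟩ by simpa using huw)
      exact ⟨.inl i, Finset.mem_image_of_mem _ hi1, Finset.mem_image_of_mem _ hi2⟩
    · obtain ⟨j, hj1, hj2⟩ := td₂.cover_edge
        (show (G.induce V₂).Adj ⟨u, h1⟩ ⟨w, h2⟩ by simpa using huw)
      exact ⟨.inr j, Finset.mem_image_of_mem _ hj1, Finset.mem_image_of_mem _ hj2⟩
  bag_connected v := by
    classical
    set JT := joinTree td₁.tree td₂.tree r₁ r₂ with hJT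
    set A : Set (td₁.ι ⊕ td₂.ι) := {p | v ∈ (Sum.elim (fun i => (td₁.bag i).image Subtype.val)
      (fun j => (td₂.bag j).image Subtype.val) p : Finset V)} with hA
    have mem₁ : ∀ {i : td₁.ι}, Sum.inl i ∈ A →
        ∃ h1 : v ∈ V₁, (⟨v, h1⟩ : ↥V₁) ∈ td₁.bag i := by
      intro i h
      obtain ⟨z, hz, hzv⟩ := Finset.mem_image.mp h
      refine ⟨hzv ▸ z.2, ?_⟩
      have : (⟨v, hzv ▸ z.2⟩ : ↥V₁) = z := Subtype.ext hzv.symm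
      rw [this]; exact hz
    have mem₂ : ∀ {j : td₂.ι}, Sum.inr j ∈ A →
        ∃ h2 : v ∈ V₂, (⟨v, h2⟩ : ↥V₂) ∈ td₂.bag j := by
      intro j h
      obtain ⟨z, hz, hzv⟩ := Finset.mem_image.mp h
      refine ⟨hzv ▸ z.2, ?_⟩
      have : (⟨v, hzv ▸ z.2⟩ : ↥V₂) = z := Subtype.ext hzv.symm
      rw [this]; exact hz
    have mem₁' : ∀ {i : td₁.ι} (h1 : v ∈ V₁), (⟨v, h1⟩ : ↥V₁) ∈ td₁.bag i → Sum.inl i ∈ A :=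
      fun h1 hb => Finset.mem_image_of_mem Subtype.val hb
    have mem₂' : ∀ {j : td₂.ι} (h2 : v ∈ V₂), (⟨v, h2⟩ : ↥V₂) ∈ td₂.bag j → Sum.inr j ∈ A :=
      fun h2 hb => Finset.mem_image_of_mem Subtype.val hb
    have key₁ : ∀ (h1 : v ∈ V₁) (i i' : td₁.ι) (hi : (⟨v, h1⟩ : ↥V₁) ∈ td₁.bag i)
        (hi' : (⟨v, h1⟩ : ↥V₁) ∈ td₁.bag i'),
        (JT.induce A).Reachable ⟨Sum.inl i, mem₁' h1 hi⟩ ⟨Sum.inl i', mem₁' h1 hi'⟩ := by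
      intro h1 i i' hi hi'
      have hc := (td₁.bag_connected ⟨v, h1⟩).preconnected ⟨i, hi⟩ ⟨i', hi'⟩
      exact reach_map' (H := JT.induce A)
        (fun z => (⟨Sum.inl z.val, mem₁' h1 z.2⟩ : ↥A))
        (fun x y hxy => Or.inl (by simpa [hJT] using hxy)) hc
    have key₂ : ∀ (h2 : v ∈ V₂) (j j' : td₂.ι) (hj : (⟨v, h2⟩ : ↥V₂) ∈ td₂.bag j)
        (hj' : (⟨v, h2⟩ : ↥V₂) ∈ td₂.bag j'),
        (JT.induce A).Reachable ⟨Sum.inr j, mem₂' h2 hj⟩ ⟨Sum.inr j', mem₂' h2 hj'⟩ := by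
      intro h2 j j' hj hj'
      have hc := (td₂.bag_connected ⟨v, h2⟩).preconnected ⟨j, hj⟩ ⟨j', hj'⟩
      exact reach_map' (H := JT.induce A)
        (fun z => (⟨Sum.inr z.val, mem₂' h2 z.2⟩ : ↥A))
        (fun x y hxy => Or.inl (by simpa [hJT] using hxy)) hc
    rw [connected_iff _]
    constructor
    · -- preconnected
      rintro ⟨(i | j), hp⟩ ⟨(i' | j'), hp'⟩
      · obtain ⟨h1, hi⟩ := mem₁ hp
        obtain ⟨h1', hi'⟩ := mem₁ hp'
        exact key₁ h1 i i' hi hi'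
      · obtain ⟨h1, hi⟩ := mem₁ hp
        obtain ⟨h2, hj'⟩ := mem₂ hp'
        have hcross : (JT.induce A).Adj ⟨Sum.inl r₁, mem₁' h1 (hr v h1 h2).1⟩
            ⟨Sum.inr r₂, mem₂' h2 (hr v h1 h2).2⟩ := by
          show JT.Adj (Sum.inl r₁) (Sum.inr r₂)
          exact ⟨rfl, rfl⟩
        exact ((key₁ h1 i r₁ hi (hr v h1 h2).1).trans hcross.reachable).trans
          (key₂ h2 r₂ j' (hr v h1 h2).2 hj')
      · obtain ⟨h2, hj⟩ := mem₂ hp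
        obtain ⟨h1, hi'⟩ := mem₁ hp'
        have hcross : (JT.induce A).Adj ⟨Sum.inl r₁, mem₁' h1 (hr v h1 h2).1⟩
            ⟨Sum.inr r₂, mem₂' h2 (hr v h1 h2).2⟩ := by
          show JT.Adj (Sum.inl r₁) (Sum.inr r₂)
          exact ⟨rfl, rfl⟩
        exact ((key₂ h2 j r₂ hj (hr v h1 h2).2).trans hcross.reachable.symm).trans
          (key₁ h1 r₁ i' (hr v h1 h2).1 hi')
      · obtain ⟨h2, hj⟩ := mem₂ hp
        obtain ⟨h2', hj'⟩ := mem₂ hp'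
        exact key₂ h2 j j' hj hj'
    · -- nonempty
      rcases hcov v with h | h
      · obtain ⟨i, hi⟩ := td₁.cover_vertex ⟨v, h⟩
        exact ⟨⟨.inl i, mem₁' h hi⟩⟩
      · obtain ⟨j, hj⟩ := td₂.cover_vertex ⟨v, h⟩
        exact ⟨⟨.inr j, mem₂' h hj⟩⟩

lemma glueTD_width (G : SimpleGraph V) (V₁ V₂ : Set V) (hcov) (hedge)
    (td₁ : TreeDecomp (G.induce V₁)) (td₂ : TreeDecomp (G.induce V₂)) (r₁ : td₁.ι) (r₂ : td₂.ι)
    (hr) : (glueTD G V₁ V₂ hcov hedge td₁ td₂ r₁ r₂ hr).width ≤ max td₁.width td₂.width := by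
  classical
  unfold TreeDecomp.width
  rw [← max_sub_one]
  apply Nat.sub_le_sub_right
  letI := td₁.fin; letI := td₂.fin
  apply Finset.sup_le
  rintro (i | j) _
  · show ((td₁.bag i).image Subtype.val).card ≤ _
    calc ((td₁.bag i).image Subtype.val).card = (td₁.bag i).card :=
        Finset.card_image_of_injective _ Subtype.val_injective
      _ ≤ _ := le_max_of_le_left (Finset.le_sup (f := fun i => (td₁.bag i).card) (Finset.mem_univ i))
  · show ((td₂.bag j).image Subtype.val).card ≤ _
    calc ((td₂.bag j).image Subtype.val).card = (td₂.bag j).card :=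
        Finset.card_image_of_injective _ Subtype.val_injective
      _ ≤ _ := le_max_of_le_right (Finset.le_sup (f := fun j => (td₂.bag j).card) (Finset.mem_univ j))

lemma glue_tw [Fintype V] (G : SimpleGraph V) (V₁ V₂ : Set V)
    (hcov : ∀ v : V, v ∈ V₁ ∨ v ∈ V₂)
    (hedge : ∀ u w : V, G.Adj u w → (u ∈ V₁ ∧ w ∈ V₁) ∨ (u ∈ V₂ ∧ w ∈ V₂))
    (hsub : (V₁ ∩ V₂).Subsingleton) :
    treewidth G ≤ max (treewidth (G.induce V₁)) (treewidth (G.induce V₂)) := by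
  haveI : Fintype ↥V₁ := Fintype.ofFinite _
  haveI : Fintype ↥V₂ := Fintype.ofFinite _
  obtain ⟨td₁, h₁⟩ := exists_td_width_eq (G.induce V₁)
  obtain ⟨td₂, h₂⟩ := exists_td_width_eq (G.induce V₂)
  rw [← h₁, ← h₂]
  by_cases hx : ∃ x, x ∈ V₁ ∧ x ∈ V₂
  · obtain ⟨x, hx1, hx2⟩ := hx
    obtain ⟨r₁, hr₁⟩ := td₁.cover_vertex ⟨x, hx1⟩
    obtain ⟨r₂, hr₂⟩ := td₂.cover_vertex ⟨x, hx2⟩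
    have hr : ∀ (y : V) (h1 : y ∈ V₁) (h2 : y ∈ V₂),
        (⟨y, h1⟩ : ↥V₁) ∈ td₁.bag r₁ ∧ (⟨y, h2⟩ : ↥V₂) ∈ td₂.bag r₂ := by
      intro y h1 h2
      have hyx : y = x := hsub ⟨h1, h2⟩ ⟨hx1, hx2⟩
      subst hyx
      exact ⟨hr₁, hr₂⟩
    exact (treewidth_le_width (glueTD G V₁ V₂ hcov hedge td₁ td₂ r₁ r₂ hr)).trans
      (glueTD_width G V₁ V₂ hcov hedge td₁ td₂ r₁ r₂ hr)
  · push_neg at hx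
    haveI h1 : Nonempty td₁.ι := letI := td₁.fin; td₁.isTree.isConnected.nonempty
    haveI h2 : Nonempty td₂.ι := letI := td₂.fin; td₂.isTree.isConnected.nonempty
    obtain ⟨r₁⟩ := h1
    obtain ⟨r₂⟩ := h2
    have hr : ∀ (y : V) (h1 : y ∈ V₁) (h2 : y ∈ V₂),
        (⟨y, h1⟩ : ↥V₁) ∈ td₁.bag r₁ ∧ (⟨y, h2⟩ : ↥V₂) ∈ td₂.bag r₂ :=
      fun y hy1 hy2 => absurd hy2 (hx y hy1)
    exact (treewidth_le_width (glueTD G V₁ V₂ hcov hedge td₁ td₂ r₁ r₂ hr)).trans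
      (glueTD_width G V₁ V₂ hcov hedge td₁ td₂ r₁ r₂ hr)

end Glue
section Blocks
variable {V : Type}

noncomputable def induceInduceIso (G : SimpleGraph V) (T : Set V) (S : Set ↥T) :
    (G.induce T).induce S ≃g G.induce (Subtype.val '' S) where
  toEquiv := Equiv.Set.image Subtype.val S Subtype.val_injective
  map_rel_iff' := by
    intro a b
    simp [Equiv.Set.image, Equiv.Set.imageOfInjOn]

lemma connected_induce_image {G : SimpleGraph V} {T : Set V} {S : Set ↥T} :
    ((G.induce T).induce S).Connected ↔ (G.induce (Subtype.val '' S)).Connected := by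
  constructor
  · intro h
    exact h.map (induceInduceIso G T S).toHom (induceInduceIso G T S).toEquiv.surjective
  · intro h
    exact h.map (induceInduceIso G T S).symm.toHom
      (induceInduceIso G T S).symm.toEquiv.surjective

lemma tw_induce_image [Fintype V] (G : SimpleGraph V) (T : Set V) (S : Set ↥T) :
    treewidth ((G.induce T).induce S) = treewidth (G.induce (Subtype.val '' S)) := by
  haveI : Fintype ↥T := Fintype.ofFinite _
  haveI : Fintype ↥S := Fintype.ofFinite _
  haveI : Fintype ↥(Subtype.val '' S) := Fintype.ofFinite _
  exact treewidth_iso (induceInduceIso G T S)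

lemma nocut_image {G : SimpleGraph V} {T : Set V} {S : Set ↥T}
    (h : NoCutvertex (G.induce T) S) : NoCutvertex G (Subtype.val '' S) := by
  rintro v ⟨v', hv'S, rfl⟩ x y
  have pre : ∀ z : ↥(Subtype.val '' S \ {v'.val}),
      ∃ w : ↥(S \ {v'}), (w.val.val : V) = z.val := by
    rintro ⟨z, ⟨⟨w, hwS, rfl⟩, hzne⟩⟩
    refine ⟨⟨w, hwS, fun hc => hzne ?_⟩, rfl⟩
    exact Set.mem_singleton_iff.mpr (congrArg Subtype.val (Set.mem_singleton_iff.mp hc))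
  obtain ⟨wx, hwx⟩ := pre x
  obtain ⟨wy, hwy⟩ := pre y
  have hreach := h v' hv'S wx wy
  have gmap := reach_map' (H := G.induce (Subtype.val '' S \ {v'.val}))
    (fun z => (⟨z.val.val, ⟨⟨z.val, z.2.1, rfl⟩, fun hc => z.2.2 (Subtype.ext hc)⟩⟩ :
      ↥(Subtype.val '' S \ {v'.val})))
    (fun a b hab => Or.inl (by simpa using hab)) hreach
  convert gmap using 2
  · exact Subtype.ext hwx.symm
  · exact Subtype.ext hwy.symm

lemma nocut_preimage {G : SimpleGraph V} {T : Set V} {S : Set ↥T}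
    (h : NoCutvertex G (Subtype.val '' S)) : NoCutvertex (G.induce T) S := by
  intro v' hv' x y
  have hv : v'.val ∈ Subtype.val '' S := ⟨v', hv', rfl⟩
  have hreach := h v'.val hv
    ⟨x.val.val, ⟨⟨x.val, x.2.1, rfl⟩, fun hc => x.2.2 (Subtype.ext hc)⟩⟩
    ⟨y.val.val, ⟨⟨y.val, y.2.1, rfl⟩, fun hc => y.2.2 (Subtype.ext hc)⟩⟩
  have gmap := reach_map' (H := (G.induce T).induce (S \ {v'}))
    (fun z => (⟨⟨z.val, by obtain ⟨w, _, hw⟩ := z.2.1; exact hw ▸ w.2⟩, by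
      obtain ⟨w, hwS, hw⟩ := z.2.1
      refine ⟨?_, fun hc => z.2.2 ?_⟩
      · have he : (⟨z.val, by obtain ⟨w', _, hw'⟩ := z.2.1; exact hw' ▸ w'.2⟩ : ↥T) = w :=
          Subtype.ext hw.symm
        rw [he]; exact hwS
      · exact Set.mem_singleton_iff.mpr (congrArg Subtype.val (Set.mem_singleton_iff.mp hc))⟩ :
      ↥(S \ {v'})))
    (fun a b hab => Or.inl (by simpa using hab)) hreach
  convert gmap using 2 <;> exact Subtype.ext (Subtype.ext rfl)

end Blocks
section Main
variable {V : Type}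

lemma walk_support_mem {G : SimpleGraph V} {S : Set V} {a b : ↥S}
    (w : (G.induce S).Walk a b) :
    ∀ z ∈ (w.map (SimpleGraph.Embedding.induce S).toHom).support, z ∈ S := by
  intro z hz
  rw [SimpleGraph.Walk.support_map] at hz
  obtain ⟨z', _, rfl⟩ := List.mem_map.mp hz
  exact z'.2

lemma isBlock_image {G : SimpleGraph V} {V₁ V₂ : Set V}
    (hedge : ∀ u w : V, G.Adj u w → (u ∈ V₁ ∧ w ∈ V₁) ∨ (u ∈ V₂ ∧ w ∈ V₂))
    (hsub : (V₁ ∩ V₂).Subsingleton)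
    {S : Set ↥V₁} (hS : IsBlock (G.induce V₁) S)
    (h2 : ∃ x ∈ S, ∃ y ∈ S, x ≠ y) :
    IsBlock G (Subtype.val '' S) := by
  obtain ⟨hne, hconn, hnocut, hmax⟩ := hS
  refine ⟨hne.image _, connected_induce_image.mp hconn, nocut_image hnocut, ?_⟩
  intro T hsub2 hTconn hTnocut
  obtain ⟨x, hxS, y, hyS, hxy⟩ := h2
  have hs : ∃ s : ↥V₁, s ∈ S ∧ s.val ∉ V₂ := by
    by_cases hx2 : x.val ∈ V₂
    · by_cases hy2 : y.val ∈ V₂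
      · exact absurd (Subtype.ext (hsub ⟨x.2, hx2⟩ ⟨y.2, hy2⟩)) hxy
      · exact ⟨y, hyS, hy2⟩
    · exact ⟨x, hxS, hx2⟩
  obtain ⟨s, hsS, hs2⟩ := hs
  have hsT : s.val ∈ T := hsub2 ⟨s, hsS, rfl⟩
  have hT1 : T ⊆ V₁ := by
    by_contra hc
    obtain ⟨y0, hy0T, hy0⟩ := Set.not_subset.mp hc
    by_cases hvT : ∃ v, v ∈ V₁ ∩ V₂ ∧ v ∈ T
    · obtain ⟨v, hvV, hvT'⟩ := hvT
      have hsv : s.val ≠ v := fun h => hs2 (h ▸ hvV.2)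
      have hy0v : y0 ≠ v := fun h => hy0 (h ▸ hvV.1)
      obtain ⟨w⟩ := hTnocut v hvT' ⟨s.val, ⟨hsT, hsv⟩⟩ ⟨y0, ⟨hy0T, hy0v⟩⟩
      have hsupp := walk_support_mem w
      obtain ⟨x0, hx0supp, hx0⟩ := crossing hedge hy0
        (w.map (SimpleGraph.Embedding.induce (T \ {v})).toHom) s.2 hs2
      have : x0 = v := hsub hx0 hvV
      exact (hsupp x0 hx0supp).2 (this ▸ rfl)
    · push_neg at hvT
      obtain ⟨w⟩ := hTconn.preconnected ⟨s.val, hsT⟩ ⟨y0, hy0T⟩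
      have hsupp := walk_support_mem w
      obtain ⟨x0, hx0supp, hx0⟩ := crossing hedge hy0
        (w.map (SimpleGraph.Embedding.induce T).toHom) s.2 hs2
      exact hvT x0 hx0 (hsupp x0 hx0supp)
  set S' : Set ↥V₁ := {z : ↥V₁ | z.val ∈ T} with hS'def
  have hT' : Subtype.val '' S' = T := by
    ext t
    constructor
    · rintro ⟨z, hz, rfl⟩; exact hz
    · intro ht; exact ⟨⟨t, hT1 ht⟩, ht, rfl⟩
  have hSS' : S ⊆ S' := fun z hz => hsub2 ⟨z, hz, rfl⟩
  have hconn' : ((G.induce V₁).induce S').Connected :=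
    connected_induce_image.mpr (by rw [hT']; exact hTconn)
  have hnocut' : NoCutvertex (G.induce V₁) S' :=
    nocut_preimage (by rw [hT']; exact hTnocut)
  have hfin := hmax S' hSS' hconn' hnocut'
  rw [← hT', hfin]

lemma blockSup_mono [Fintype V] {G : SimpleGraph V} {V₁ V₂ : Set V}
    (hedge : ∀ u w : V, G.Adj u w → (u ∈ V₁ ∧ w ∈ V₁) ∨ (u ∈ V₂ ∧ w ∈ V₂))
    (hsub : (V₁ ∩ V₂).Subsingleton) :
    sSup {w : ℕ | ∃ S : Set ↥V₁, IsBlock (G.induce V₁) S ∧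
        w = treewidth ((G.induce V₁).induce S)}
      ≤ sSup {w : ℕ | ∃ S : Set V, IsBlock G S ∧ w = treewidth (G.induce S)} := by
  apply csSup_le'
  rintro w ⟨S, hSblk, rfl⟩
  by_cases hsing : S.Subsingleton
  · haveI : Subsingleton ↥S := ⟨fun a b => Subtype.ext (hsing a.2 b.2)⟩
    haveI : Fintype ↥S := Fintype.ofFinite _
    rw [treewidth_le_of_subsingleton]
    exact Nat.zero_le _
  · rw [Set.not_subsingleton_iff] at hsing
    obtain ⟨a, ha, b, hb, hab⟩ := hsing
    have hblk := isBlock_image hedge hsub hSblk ⟨a, ha, b, hb, hab⟩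
    apply le_csSup
    · exact ⟨treewidth G, by rintro w ⟨S0, _, rfl⟩; exact treewidth_induce_le G S0⟩
    · exact ⟨Subtype.val '' S, hblk, tw_induce_image G V₁ S⟩

lemma finish_split [Fintype V] {G : SimpleGraph V} {V₁ V₂ : Set V}
    (hcov : ∀ v : V, v ∈ V₁ ∨ v ∈ V₂)
    (hedge : ∀ u w : V, G.Adj u w → (u ∈ V₁ ∧ w ∈ V₁) ∨ (u ∈ V₂ ∧ w ∈ V₂))
    (hsub : (V₁ ∩ V₂).Subsingleton)
    (h1 : treewidth (G.induce V₁) ≤ sSup {w : ℕ | ∃ S : Set ↥V₁,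
        IsBlock (G.induce V₁) S ∧ w = treewidth ((G.induce V₁).induce S)})
    (h2 : treewidth (G.induce V₂) ≤ sSup {w : ℕ | ∃ S : Set ↥V₂,
        IsBlock (G.induce V₂) S ∧ w = treewidth ((G.induce V₂).induce S)}) :
    treewidth G ≤ sSup {w : ℕ | ∃ S : Set V, IsBlock G S ∧ w = treewidth (G.induce S)} := by
  refine (glue_tw G V₁ V₂ hcov hedge hsub).trans (max_le ?_ ?_)
  · exact h1.trans (blockSup_mono hedge hsub)
  · refine h2.trans (blockSup_mono (fun u w h => (hedge u w h).symm) ?_)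
    rwa [Set.inter_comm]

lemma main_le : ∀ (n : ℕ) (V : Type) (inst : Fintype V) (G : SimpleGraph V),
    @Fintype.card V inst ≤ n →
    treewidth G ≤ sSup {w : ℕ | ∃ S : Set V, IsBlock G S ∧ w = treewidth (G.induce S)} := by
  intro n
  induction n with
  | zero =>
    intro V inst G hcard
    have h0 := treewidth_le_width (trivTD G)
    rw [trivTD_width] at h0
    exact le_trans (by omega) (Nat.zero_le _)
  | succ n ih =>
    intro V inst G hcard
    by_cases hone : Fintype.card V ≤ 1
    · have h0 := treewidth_le_width (trivTD G)
      rw [trivTD_width] at h0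
      exact le_trans (by omega) (Nat.zero_le _)
    haveI : Nonempty V := Fintype.card_pos_iff.mp (by omega)
    by_cases hgood : (G.induce (Set.univ : Set V)).Connected ∧ NoCutvertex G Set.univ
    · have hblk : IsBlock G Set.univ := ⟨Set.univ_nonempty, hgood.1, hgood.2,
        fun T hsubT _ _ => Set.eq_univ_of_univ_subset hsubT⟩
      have heq : treewidth G = treewidth (G.induce Set.univ) := by
        haveI : Fintype ↥(Set.univ : Set V) := Fintype.ofFinite _
        exact (treewidth_iso (induceUnivIso G)).symm
      refine le_csSup ⟨treewidth G, ?_⟩ ⟨Set.univ, hblk, heq⟩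
      rintro w ⟨S, _, rfl⟩
      exact treewidth_induce_le G S
    · classical
      by_cases hconn : G.Connected
      · -- connected, so there is a cutvertex
        have hic : (G.induce (Set.univ : Set V)).Connected :=
          hconn.map (induceUnivIso G).symm.toHom (induceUnivIso G).symm.toEquiv.surjective
        have hnc : ¬ NoCutvertex G Set.univ := fun h => hgood ⟨hic, h⟩
        unfold NoCutvertex at hnc
        push_neg at hnc
        obtain ⟨v, -, x0, y0, hnr⟩ := hnc
        have hDdef : (Set.univ \ {v} : Set V) = Set.univ \ {v} := rfl
        set V₁ : Set V := {z | z = v ∨ ∃ h : z ∈ Set.univ \ {v},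
          (G.induce (Set.univ \ {v})).Reachable x0 ⟨z, h⟩} with hV₁
        set V₂ : Set V := {z | z = v ∨ ∃ h : z ∈ Set.univ \ {v},
          ¬ (G.induce (Set.univ \ {v})).Reachable x0 ⟨z, h⟩} with hV₂
        have hcov : ∀ z : V, z ∈ V₁ ∨ z ∈ V₂ := by
          intro z
          by_cases hz : z = v
          · exact Or.inl (Or.inl hz)
          · have hzD : z ∈ Set.univ \ {v} := ⟨trivial, hz⟩
            by_cases hr : (G.induce (Set.univ \ {v})).Reachable x0 ⟨z, hzD⟩
            · exact Or.inl (Or.inr ⟨hzD, hr⟩)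
            · exact Or.inr (Or.inr ⟨hzD, hr⟩)
        have hsub : (V₁ ∩ V₂).Subsingleton := by
          have hv : ∀ z, z ∈ V₁ ∩ V₂ → z = v := by
            rintro z ⟨(h1 | ⟨hd1, hr1⟩), (h2 | ⟨hd2, hr2⟩)⟩
            · exact h1
            · exact h1
            · exact h2
            · exact absurd hr1 hr2
          intro p hp q hq
          rw [hv p hp, hv q hq]
        have hedge : ∀ u w : V, G.Adj u w → (u ∈ V₁ ∧ w ∈ V₁) ∨ (u ∈ V₂ ∧ w ∈ V₂) := by
          intro u w hadj
          by_cases hu : u = v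
          · rcases hcov w with h | h
            · exact Or.inl ⟨Or.inl hu, h⟩
            · exact Or.inr ⟨Or.inl hu, h⟩
          by_cases hw : w = v
          · rcases hcov u with h | h
            · exact Or.inl ⟨h, Or.inl hw⟩
            · exact Or.inr ⟨h, Or.inl hw⟩
          have huD : u ∈ Set.univ \ {v} := ⟨trivial, hu⟩
          have hwD : w ∈ Set.univ \ {v} := ⟨trivial, hw⟩
          have hadj' : (G.induce (Set.univ \ {v})).Adj ⟨u, huD⟩ ⟨w, hwD⟩ := by simpa using hadj
          by_cases hr : (G.induce (Set.univ \ {v})).Reachable x0 ⟨u, huD⟩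
          · exact Or.inl ⟨Or.inr ⟨huD, hr⟩, Or.inr ⟨hwD, hr.trans hadj'.reachable⟩⟩
          · refine Or.inr ⟨Or.inr ⟨huD, hr⟩, Or.inr ⟨hwD, fun hrw => hr ?_⟩⟩
            exact hrw.trans hadj'.symm.reachable
        have hy1 : y0.val ∉ V₁ := by
          rintro (h | ⟨hd, hr⟩)
          · exact y0.2.2 h
          · refine hnr ?_
            have he : (⟨y0.val, hd⟩ : ↥(Set.univ \ {v})) = y0 := Subtype.ext rfl
            rwa [he] at hr
        have hx2 : x0.val ∉ V₂ := by
          rintro (h | ⟨hd, hr⟩)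
          · exact x0.2.2 h
          · refine hr ?_
            have he : (⟨x0.val, hd⟩ : ↥(Set.univ \ {v})) = x0 := Subtype.ext rfl
            rw [he]
        have hc1 : Fintype.card ↥V₁ ≤ n := by
          have hlt : Fintype.card ↥V₁ < Fintype.card V := by
            simpa using Fintype.card_subtype_lt (p := (· ∈ V₁)) (x := y0.val) hy1
          omega
        have hc2 : Fintype.card ↥V₂ ≤ n := by
          have hlt : Fintype.card ↥V₂ < Fintype.card V := by
            simpa using Fintype.card_subtype_lt (p := (· ∈ V₂)) (x := x0.val) hx2
          omega
        exact finish_split hcov hedge hsub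
          (ih ↥V₁ _ (G.induce V₁) hc1) (ih ↥V₂ _ (G.induce V₂) hc2)
      · -- disconnected
        rw [connected_iff] at hconn
        push_neg at hconn
        have hpre : ¬ G.Preconnected := fun h => not_isEmpty_of_nonempty V (hconn h)
        unfold SimpleGraph.Preconnected at hpre
        push_neg at hpre
        obtain ⟨a, b, hnr⟩ := hpre
        set V₁ : Set V := {z | G.Reachable a z} with hV₁
        set V₂ : Set V := {z | ¬ G.Reachable a z} with hV₂
        have hcov : ∀ z : V, z ∈ V₁ ∨ z ∈ V₂ := fun z => em _
        have hsub : (V₁ ∩ V₂).Subsingleton := fun p hp q hq => absurd hp.1 hp.2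
        have hedge : ∀ u w : V, G.Adj u w → (u ∈ V₁ ∧ w ∈ V₁) ∨ (u ∈ V₂ ∧ w ∈ V₂) := by
          intro u w hadj
          by_cases hr : G.Reachable a u
          · exact Or.inl ⟨hr, hr.trans hadj.reachable⟩
          · exact Or.inr ⟨hr, fun hrw => hr (hrw.trans hadj.symm.reachable)⟩
        have hc1 : Fintype.card ↥V₁ ≤ n := by
          have hlt : Fintype.card ↥V₁ < Fintype.card V := by
            simpa using Fintype.card_subtype_lt (p := (· ∈ V₁)) (x := b) hnr
          omega
        have hc2 : Fintype.card ↥V₂ ≤ n := by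
          have hx2 : a ∉ V₂ := fun h => h (Reachable.refl a)
          have hlt : Fintype.card ↥V₂ < Fintype.card V := by
            simpa using Fintype.card_subtype_lt (p := (· ∈ V₂)) (x := a) hx2
          omega
        exact finish_split hcov hedge hsub
          (ih ↥V₁ _ (G.induce V₁) hc1) (ih ↥V₂ _ (G.induce V₂) hc2)

end Main

theorem stmt17 {V : Type} [Fintype V] (G : SimpleGraph V) :
    treewidth G = sSup {w : ℕ | ∃ S : Set V, IsBlock G S ∧ w = treewidth (G.induce S)} := by
  apply le_antisymm
  · exact main_le (Fintype.card V) V ‹_› G le_rfl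
  · apply csSup_le'
    rintro w ⟨S, _, rfl⟩
    exact treewidth_induce_le G S
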